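/- Given a sequence σ of distinct values from [n], a value b ∈ [n] not appearing in σ, and a binary vector B such that inv(σ) is obtainable from B by deleting one coordinate, there is exactly one position at which b can be inserted into σ so that the resulting sequence has inversion vector equal to B. -/

import Mathlib

/-- The inversion vector of a sequence of distinct values:
`inv(σ)_i = 1` iff `σ_i > σ_{i+1}`. -/
def invVec (l : List ℕ) : List Bool :=
  List.zipWith (fun a b => decide (a > b)) l l.tail

private def tIns (a : ℕ → ℕ) (b p j : ℕ) : ℕ :=
  if j < p then a j else if j = p then b else a (j - 1)

private def wIns (a : ℕ → ℕ) (b p j : ℕ) : Bool :=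
  decide (tIns a b p j > tIns a b p (j + 1))

private def vv (a : ℕ → ℕ) (j : ℕ) : Bool := decide (a j > a (j + 1))

private lemma tIns_lt (a : ℕ → ℕ) (b : ℕ) {p j : ℕ} (h : j < p) :
    tIns a b p j = a j := by simp [tIns, h]

private lemma tIns_self (a : ℕ → ℕ) (b p : ℕ) : tIns a b p p = b := by
  simp [tIns]

private lemma tIns_gt (a : ℕ → ℕ) (b : ℕ) {p j : ℕ} (h : p < j) :
    tIns a b p j = a (j - 1) := by
  simp [tIns, show ¬ j < p from by omega, show j ≠ p from by omega]

private lemma wIns_lt (a : ℕ → ℕ) (b p j : ℕ) (h : j + 1 < p) :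
    wIns a b p j = vv a j := by
  rw [wIns, tIns_lt a b (by omega), tIns_lt a b h]
  rfl

private lemma wIns_pred (a : ℕ → ℕ) (b p j : ℕ) (h : j + 1 = p) :
    wIns a b p j = decide (a j > b) := by
  rw [wIns, tIns_lt a b (by omega), h, tIns_self]

private lemma wIns_self (a : ℕ → ℕ) (b p : ℕ) :
    wIns a b p p = decide (b > a p) := by
  rw [wIns, tIns_self, tIns_gt a b (Nat.lt_succ_self p)]
  norm_num

private lemma wIns_gt (a : ℕ → ℕ) (b p j : ℕ) (h : p < j) :
    wIns a b p j = vv a (j - 1) := by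
  obtain ⟨k, rfl⟩ : ∃ k, j = k + 1 := ⟨j - 1, by omega⟩
  rw [wIns, tIns_gt a b h, tIns_gt a b (by omega)]
  simp only [Nat.add_sub_cancel]
  rfl

private lemma stepL (a : ℕ → ℕ) (b k : ℕ) (h : vv a k = decide (b > a k))
    (hne : b ≠ a (k + 1)) : decide (b > a (k + 1)) = vv a k := by
  rw [vv, decide_eq_decide] at h ⊢
  omega

private lemma stepR (a : ℕ → ℕ) (b k : ℕ) (h : vv a k = decide (a (k + 1) > b))
    (hne : b ≠ a k) : decide (a k > b) = vv a k := by
  rw [vv, decide_eq_decide] at h ⊢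
  omega

private lemma mono_ge (a : ℕ → ℕ) (p : ℕ) :
    ∀ r, p ≤ r → (∀ j, p ≤ j → j < r → a (j + 1) ≤ a j) → a r ≤ a p := by
  intro r
  induction r with
  | zero =>
    intro h _
    have h0 : p = 0 := by omega
    subst h0
    exact le_rfl
  | succ r ih =>
    intro hpr h
    rcases Nat.eq_or_lt_of_le hpr with hh | hh
    · subst hh
      exact le_rfl
    · have h1 : a (r + 1) ≤ a r := h r (by omega) (by omega)
      have h2 : a r ≤ a p := ih (by omega) (fun j hj1 hj2 => h j hj1 (by omega))
      omega

private lemma mono_le (a : ℕ → ℕ) (p : ℕ) :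
    ∀ r, p ≤ r → (∀ j, p ≤ j → j < r → a j ≤ a (j + 1)) → a p ≤ a r := by
  intro r
  induction r with
  | zero =>
    intro h _
    have h0 : p = 0 := by omega
    subst h0
    exact le_rfl
  | succ r ih =>
    intro hpr h
    rcases Nat.eq_or_lt_of_le hpr with hh | hh
    · subst hh
      exact le_rfl
    · have h1 : a r ≤ a (r + 1) := h r (by omega) (by omega)
      have h2 : a p ≤ a r := ih (by omega) (fun j hj1 hj2 => h j hj1 (by omega))
      omega

private lemma key (a : ℕ → ℕ) (b m i : ℕ) (Bf : ℕ → Bool)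
    (him : i < m)
    (hbne : ∀ j, j < m → b ≠ a j)
    (hlo : ∀ j, j < i → Bf j = vv a j)
    (hhi : ∀ j, i < j → j < m → Bf j = vv a (j - 1)) :
    ∃! p, p ≤ m ∧ ∀ j, j < m → Bf j = wIns a b p j := by
  -- uniqueness helper
  have noLt : ∀ p q, q ≤ m →
      (∀ j, j < m → Bf j = wIns a b p j) →
      (∀ j, j < m → Bf j = wIns a b q j) → p < q → False := by
    intro p q hqm hGp hGq hpq
    have hpm : p < m := by omega
    have E0 : Bf p = decide (b > a p) := by rw [hGp p hpm, wIns_self]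
    rcases Nat.eq_or_lt_of_le (Nat.succ_le_of_lt hpq) with h1 | h1
    · -- q = p + 1
      have E1 : Bf p = decide (a p > b) := by rw [hGq p hpm, wIns_pred a b q p h1]
      rw [E0, decide_eq_decide] at E1
      have := hbne p hpm
      omega
    · -- p + 1 < q
      have E1 : Bf p = vv a p := by rw [hGq p hpm, wIns_lt a b q p h1]
      have hvp : vv a p = decide (b > a p) := by rw [← E1, E0]
      have hch : ∀ j, p < j → j < q - 1 → vv a j = vv a (j - 1) := by
        intro j hj1 hj2
        have hjm : j < m := by omega
        have A : Bf j = vv a (j - 1) := by rw [hGp j hjm, wIns_gt a b p j hj1]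
        have Bq : Bf j = vv a j := by rw [hGq j hjm, wIns_lt a b q j (by omega)]
        rw [← Bq, A]
      have hconst : ∀ j, p ≤ j → j ≤ q - 2 → vv a j = vv a p := by
        intro j
        induction j with
        | zero =>
          intro h _
          have h0 : p = 0 := by omega
          subst h0
          rfl
        | succ j ih =>
          intro h1 h2
          rcases Nat.eq_or_lt_of_le h1 with hh | hh
          · subst hh
            rfl
          · have := hch (j + 1) (by omega) (by omega)
            rw [this, Nat.add_sub_cancel]
            exact ih (by omega) (by omega)
      have hq1m : q - 1 < m := by omega
      have E2 : vv a (q - 2) = decide (a (q - 1) > b) := by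
        have A : Bf (q - 1) = vv a (q - 2) := by
          rw [hGp (q - 1) hq1m, wIns_gt a b p (q - 1) (by omega),
            show q - 1 - 1 = q - 2 from by omega]
        have Bq : Bf (q - 1) = decide (a (q - 1) > b) := by
          rw [hGq (q - 1) hq1m, wIns_pred a b q (q - 1) (by omega)]
        rw [← A, Bq]
      have E3 : vv a (q - 2) = vv a p := hconst (q - 2) (by omega) le_rfl
      cases hv : vv a p with
      | true =>
        have hb1 : b > a p := by
          rw [hv] at hvp; exact of_decide_eq_true hvp.symm
        have hb2 : a (q - 1) > b := by
          rw [E3, hv] at E2; exact of_decide_eq_true E2.symm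
        have hmono : a (q - 1) ≤ a p := by
          apply mono_ge a p (q - 1) (by omega)
          intro j hj1 hj2
          have hc := hconst j hj1 (by omega)
          rw [hv, vv] at hc
          have := of_decide_eq_true hc
          omega
        omega
      | false =>
        have hb1 : ¬ (b > a p) := by
          rw [hv] at hvp
          simpa using of_decide_eq_false hvp.symm
        have hb2 : ¬ (a (q - 1) > b) := by
          rw [E3, hv] at E2
          simpa using of_decide_eq_false E2.symm
        have hmono : a p ≤ a (q - 1) := by
          apply mono_le a p (q - 1) (by omega)
          intro j hj1 hj2
          have hc := hconst j hj1 (by omega)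
          rw [hv, vv] at hc
          have := of_decide_eq_false hc
          omega
        have := hbne p hpm
        omega
  -- existence
  have hex : ∃ p, p ≤ m ∧ ∀ j, j < m → Bf j = wIns a b p j := by
    by_cases hβ : Bf i = decide (b > a i)
    · -- insert to the left of position i
      have mkL : ∀ p, p ≤ i →
          (∀ j, p ≤ j → j < i → vv a j = decide (b > a j)) →
          (p = 0 ∨ vv a (p - 1) = decide (a (p - 1) > b)) →
          ∀ j, j < m → Bf j = wIns a b p j := by
        intro p hpi hinv hside j hj
        rcases Nat.lt_trichotomy j p with hjp | hjp | hjp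
        · rcases Nat.eq_or_lt_of_le (Nat.succ_le_of_lt hjp) with hjp1 | hjp1
          · rw [wIns_pred a b p j hjp1]
            rcases hside with h0 | hs
            · omega
            · rw [show p - 1 = j from by omega] at hs
              rw [hlo j (by omega), hs]
          · rw [wIns_lt a b p j hjp1, hlo j (by omega)]
        · subst hjp
          rw [wIns_self]
          rcases Nat.eq_or_lt_of_le hpi with hh | hpi'
          · rw [hh]; exact hβ
          · rw [hlo j hpi', hinv j le_rfl hpi']
        · rw [wIns_gt a b p j hjp]
          rcases Nat.lt_trichotomy j i with hji | hji | hji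
          · rw [hlo j hji, hinv j (by omega) hji]
            have h1 : vv a (j - 1) = decide (b > a (j - 1)) :=
              hinv (j - 1) (by omega) (by omega)
            have h2 := stepL a b (j - 1) h1
              (by rw [show j - 1 + 1 = j from by omega]; exact hbne j (by omega))
            rw [show j - 1 + 1 = j from by omega] at h2
            exact h2
          · subst hji
            rw [hβ]
            have h1 : vv a (j - 1) = decide (b > a (j - 1)) :=
              hinv (j - 1) (by omega) (by omega)
            have h2 := stepL a b (j - 1) h1
              (by rw [show j - 1 + 1 = j from by omega]; exact hbne j hj)
            rw [show j - 1 + 1 = j from by omega] at h2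
            exact h2
          · exact hhi j hji hj
      have walk : ∀ p, p ≤ i →
          (∀ j, p ≤ j → j < i → vv a j = decide (b > a j)) →
          ∃ p', p' ≤ m ∧ ∀ j, j < m → Bf j = wIns a b p' j := by
        intro p
        induction p with
        | zero =>
          intro hpi hinv
          exact ⟨0, by omega, mkL 0 hpi hinv (Or.inl rfl)⟩
        | succ p ih =>
          intro hpi hinv
          by_cases hs : vv a p = decide (a p > b)
          · exact ⟨p + 1, by omega,
              mkL (p + 1) hpi hinv (Or.inr (by simpa using hs))⟩
          · have hbp : b ≠ a p := hbne p (by omega)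
            have hs2 : vv a p = decide (b > a p) := by
              rw [vv, decide_eq_decide]
              rw [vv, decide_eq_decide] at hs
              omega
            refine ih (by omega) (fun j hj1 hj2 => ?_)
            rcases Nat.eq_or_lt_of_le hj1 with hh | hh
            · rw [← hh]; exact hs2
            · exact hinv j (by omega) hj2
      exact walk i le_rfl (fun j hj1 hj2 => absurd hj2 (by omega))
    · -- insert to the right of position i
      have hβ' : Bf i = decide (a i > b) := by
        have hbp := hbne i him
        cases hBi : Bf i with
        | true =>
          rw [hBi] at hβ
          have h1 : ¬ (b > a i) := fun hh => hβ (by simp [hh])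
          have h2 : a i > b := by omega
          simp [h2]
        | false =>
          rw [hBi] at hβ
          have h1 : b > a i := by
            by_contra hh
            exact hβ (by simp [hh])
          have h2 : ¬ (a i > b) := by omega
          simp [h2]
      have mkR : ∀ p, i + 1 ≤ p → p ≤ m →
          (∀ j, i + 1 ≤ j → j < p → vv a (j - 1) = decide (a j > b)) →
          (p = m ∨ vv a (p - 1) = decide (b > a p)) →
          ∀ j, j < m → Bf j = wIns a b p j := by
        intro p hip hpm hinv hside j hj
        rcases Nat.lt_trichotomy j p with hjp | hjp | hjp
        · rcases Nat.eq_or_lt_of_le (Nat.succ_le_of_lt hjp) with hjp1 | hjp1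
          · -- j + 1 = p
            rw [wIns_pred a b p j hjp1]
            rcases Nat.lt_trichotomy j i with hji | hji | hji
            · omega
            · subst hji; exact hβ'
            · rw [hhi j hji hj]
              exact hinv j (by omega) (by omega)
          · -- j + 1 < p
            rw [wIns_lt a b p j hjp1]
            rcases Nat.lt_trichotomy j i with hji | hji | hji
            · exact hlo j hji
            · subst hji
              rw [hβ']
              have h1 : vv a j = decide (a (j + 1) > b) := by
                have := hinv (j + 1) (by omega) (by omega)
                rwa [Nat.add_sub_cancel] at this
              exact stepR a b j h1 (hbne j hj)
            · rw [hhi j hji hj]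
              have h1 : vv a (j - 1) = decide (a j > b) := hinv j (by omega) (by omega)
              have h2 : vv a j = decide (a (j + 1) > b) := by
                have := hinv (j + 1) (by omega) (by omega)
                rwa [Nat.add_sub_cancel] at this
              have h3 := stepR a b j h2 (hbne j hj)
              rw [h1, h3]
        · subst hjp
          rw [wIns_self]
          rcases hside with h0 | hs
          · omega
          · rw [hhi j (by omega) hj, hs]
        · rw [wIns_gt a b p j hjp]
          exact hhi j (by omega) hj
      have walk : ∀ k p, m - p ≤ k → i + 1 ≤ p → p ≤ m →
          (∀ j, i + 1 ≤ j → j < p → vv a (j - 1) = decide (a j > b)) →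
          ∃ p', p' ≤ m ∧ ∀ j, j < m → Bf j = wIns a b p' j := by
        intro k
        induction k with
        | zero =>
          intro p hk h1 h2 hinv
          exact ⟨p, h2, mkR p h1 h2 hinv (Or.inl (by omega))⟩
        | succ k ih =>
          intro p hk h1 h2 hinv
          rcases Nat.eq_or_lt_of_le h2 with hpm | hpm
          · exact ⟨p, h2, mkR p h1 h2 hinv (Or.inl hpm)⟩
          · by_cases hs : vv a (p - 1) = decide (b > a p)
            · exact ⟨p, h2, mkR p h1 h2 hinv (Or.inr hs)⟩
            · have hbp : b ≠ a p := hbne p (by omega)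
              have hs2 : vv a (p - 1) = decide (a p > b) := by
                rw [vv, decide_eq_decide]
                rw [vv, decide_eq_decide] at hs
                omega
              refine ih (p + 1) (by omega) (by omega) (by omega)
                (fun j hj1 hj2 => ?_)
              rcases Nat.eq_or_lt_of_le (show j ≤ p from by omega) with hh | hh
              · rw [hh]; exact hs2
              · exact hinv j hj1 hh
      exact walk (m - (i + 1)) (i + 1) le_rfl le_rfl (by omega)
        (fun j hj1 hj2 => absurd hj2 (by omega))
  obtain ⟨p, hp1, hp2⟩ := hex
  refine ⟨p, ⟨hp1, hp2⟩, ?_⟩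
  rintro q ⟨hq1, hq2⟩
  rcases Nat.lt_trichotomy q p with h | h | h
  · exact absurd (noLt q p hp1 hq2 hp2 h) (fun hh => hh)
  · exact h
  · exact absurd (noLt p q hq1 hp2 hq2 h) (fun hh => hh)

private lemma invVec_length (l : List ℕ) : (invVec l).length = l.length - 1 := by
  rw [invVec, List.length_zipWith, List.length_tail]
  omega

private lemma invVec_getElem (l : List ℕ) (j : ℕ) (h : j < (invVec l).length) :
    (invVec l)[j] = decide (l.getD j 0 > l.getD (j + 1) 0) := by
  have hl : j + 1 < l.length := by have := invVec_length l; omega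
  simp only [invVec, List.getElem_zipWith, List.getElem_tail]
  rw [List.getD_eq_getElem _ _ (by omega : j < l.length), List.getD_eq_getElem _ _ hl]

/-- Given a sequence `σ` of distinct values from `[n]`, a value `b ∈ [n]` not in `σ`,
and a binary vector `B` such that `inv(σ)` is obtained from `B` by deleting one
coordinate, there is exactly one position at which `b` can be inserted into `σ`
so that the resulting sequence has inversion vector `B`. -/
theorem unique_insertion_matching_inversion_vector (n : ℕ) (σ : List ℕ)
    (hnd : σ.Nodup) (hmem : ∀ x ∈ σ, x ∈ Finset.Icc 1 n)
    (b : ℕ) (hb : b ∈ Finset.Icc 1 n) (hbσ : b ∉ σ)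
    (B : List Bool) (hB : B.length = σ.length)
    (hdel : ∃ i, i < B.length ∧ invVec σ = B.eraseIdx i) :
    ∃! p, p ≤ σ.length ∧ invVec (σ.insertIdx p b) = B := by
  obtain ⟨i, hiB, hdel⟩ := hdel
  have him : i < σ.length := hB ▸ hiB
  set a : ℕ → ℕ := fun j => σ.getD j 0 with ha
  set Bf : ℕ → Bool := fun j => B.getD j false with hBf
  have hbne : ∀ j, j < σ.length → b ≠ a j := by
    intro j hj h
    apply hbσ
    have h2 : a j = σ[j] := List.getD_eq_getElem σ 0 hj
    rw [h, h2]
    exact List.getElem_mem hj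
  -- relation between Bf and vv coming from hdel
  have hvB : ∀ j, j + 1 < σ.length →
      vv a j = (if j < i then Bf j else Bf (j + 1)) := by
    intro j hj
    have hjv : j < (invVec σ).length := by rw [invVec_length]; omega
    have hje : j < (B.eraseIdx i).length := by
      rw [List.length_eraseIdx, if_pos hiB]; omega
    have h1 : vv a j = (invVec σ).getD j false := by
      rw [List.getD_eq_getElem _ _ hjv, invVec_getElem _ _ hjv]
      rfl
    rw [h1, hdel, List.getD_eq_getElem _ _ hje, List.getElem_eraseIdx]
    split
    · exact (List.getD_eq_getElem _ _ (by omega : j < B.length)).symm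
    · exact (List.getD_eq_getElem _ _ (by omega : j + 1 < B.length)).symm
  have hlo : ∀ j, j < i → Bf j = vv a j := by
    intro j hj
    rw [hvB j (by omega), if_pos hj]
  have hhi : ∀ j, i < j → j < σ.length → Bf j = vv a (j - 1) := by
    intro j hj1 hj2
    rw [hvB (j - 1) (by omega), if_neg (by omega), show j - 1 + 1 = j from by omega]
  have hkey := key a b σ.length i Bf him hbne hlo hhi
  -- translate the predicate
  have hiff : ∀ p, p ≤ σ.length →
      (invVec (σ.insertIdx p b) = B ↔ ∀ j, j < σ.length → Bf j = wIns a b p j) := by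
    intro p hp
    have hτ : (σ.insertIdx p b).length = σ.length + 1 := List.length_insertIdx_of_le_length hp b
    have htget : ∀ j, j ≤ σ.length → (σ.insertIdx p b).getD j 0 = tIns a b p j := by
      intro j hj
      have hjτ : j < (σ.insertIdx p b).length := by omega
      rw [List.getD_eq_getElem _ _ hjτ]
      rcases Nat.lt_trichotomy j p with h | h | h
      · rw [tIns_lt a b h, List.getElem_insertIdx_of_lt h (by omega)]
        exact (List.getD_eq_getElem _ _ (by omega : j < σ.length)).symm
      · subst h
        rw [tIns_self, List.getElem_insertIdx_self (by omega)]
      · obtain ⟨k, rfl⟩ : ∃ k, j = p + k + 1 := ⟨j - p - 1, by omega⟩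
        rw [tIns_gt a b h, List.getElem_insertIdx_add_succ σ b p k (by omega),
          show p + k + 1 - 1 = p + k from by omega]
        exact (List.getD_eq_getElem _ _ (by omega : p + k < σ.length)).symm
    have hwlen : (invVec (σ.insertIdx p b)).length = σ.length := by
      rw [invVec_length, hτ]
      omega
    have hwget : ∀ j, j < σ.length →
        (invVec (σ.insertIdx p b)).getD j false = wIns a b p j := by
      intro j hj
      rw [List.getD_eq_getElem _ _ (by omega), invVec_getElem _ _ (by omega),
        htget j (by omega), htget (j + 1) (by omega), wIns]
    constructor
    · intro h j hj
      have h2 : Bf j = B.getD j false := rfl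
      rw [h2, ← h, hwget j hj]
    · intro h
      apply List.ext_getElem (by rw [hwlen]; omega)
      intro j h1 h2
      rw [← List.getD_eq_getElem _ false h1, ← List.getD_eq_getElem _ false h2,
        hwget j (by omega)]
      exact (h j (by omega)).symm
  obtain ⟨p, ⟨hp1, hp2⟩, hpu⟩ := hkey
  exact ⟨p, ⟨hp1, (hiff p hp1).mpr hp2⟩,
    fun q ⟨hq1, hq2⟩ => hpu q ⟨hq1, (hiff q hq1).mp hq2⟩⟩
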